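/- Every vertex of Q_{n,k} (n ≥ 3) lies on a cycle of every even length from 4 to 2^n; and if k is even, every vertex also lies on a cycle of every odd length from k + 1 to 2^n − 1. -/

import Mathlib

open SimpleGraph

/-- The `n`-dimensional hypercube: vertices are binary strings of length `n`
(indexed so that bit `i+1` of the paper is index `i`), adjacent iff they
differ in exactly one bit. -/
def hypercube (n : ℕ) : SimpleGraph (Fin n → Bool) where
  Adj u v := ∃! i, u i ≠ v i
  symm.symm := by
    rintro u v ⟨i, hi, hu⟩
    exact ⟨i, hi.symm, fun j hj => hu j hj.symm⟩
  loopless.irrefl := by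
    rintro u ⟨i, hi, -⟩
    exact hi rfl

/-- Skip relation: `u` and `v` differ exactly in the last `k` bits
(indices `0, …, k-1`). -/
def skipRel (n k : ℕ) (u v : Fin n → Bool) : Prop :=
  u ≠ v ∧ ∀ i : Fin n, (i.val < k → u i ≠ v i) ∧ (k ≤ i.val → u i = v i)

/-- The enhanced hypercube `Q_{n,k}`: hypercube edges together with skip edges. -/
def enhanced (n k : ℕ) : SimpleGraph (Fin n → Bool) where
  Adj u v := (hypercube n).Adj u v ∨ skipRel n k u v
  symm.symm := by
    rintro u v (h | ⟨hne, h⟩)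
    · exact Or.inl ((hypercube n).adj_symm h)
    · exact Or.inr ⟨hne.symm, fun i =>
        ⟨fun hi => ((h i).1 hi).symm, fun hi => ((h i).2 hi).symm⟩⟩
  loopless.irrefl := by
    rintro u (h | ⟨hne, -⟩)
    · exact (hypercube n).loopless.irrefl u h
    · exact hne rfl

/-- The folded hypercube `FQ_n`: hypercube edges together with complementary edges. -/
def folded (n : ℕ) : SimpleGraph (Fin n → Bool) where
  Adj u v := (hypercube n).Adj u v ∨ (u ≠ v ∧ ∀ i, u i ≠ v i)
  symm.symm := by
    rintro u v (h | ⟨hne, h⟩)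
    · exact Or.inl ((hypercube n).adj_symm h)
    · exact Or.inr ⟨hne.symm, fun i => (h i).symm⟩
  loopless.irrefl := by
    rintro u (h | ⟨hne, -⟩)
    · exact (hypercube n).loopless.irrefl u h
    · exact hne rfl

/-- The Cartesian product `K₂ × G`: two copies of `G` joined by crossing edges. -/
def K2Prod {V : Type*} (G : SimpleGraph V) : SimpleGraph (Bool × V) :=
  (completeGraph Bool) □ G

/-- The edge `e` lies on a cycle of length `l` in `G`. -/
def EdgeOnCycle {V : Type*} (G : SimpleGraph V) (e : Sym2 V) (l : ℕ) : Prop :=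
  ∃ (v : V) (c : G.Walk v v), c.IsCycle ∧ c.length = l ∧ e ∈ c.edges

namespace HCAux

open Finset Walk

variable {n : ℕ} {c c' b : Bool}

lemma fin1_adj {u v : Fin 1 → Bool} (h : u ≠ v) : (hypercube 1).Adj u v := by
  have h0 : u 0 ≠ v 0 := fun he => h (funext fun i => by
    have : i = 0 := Subsingleton.elim i 0
    rw [this]; exact he)
  exact ⟨0, h0, fun j _ => Subsingleton.elim j 0⟩

lemma adj_snoc {w : Fin n → Bool} (h : c ≠ c') :
    (hypercube (n+1)).Adj (Fin.snoc w c) (Fin.snoc w c') := by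
  refine ⟨Fin.last n, by simpa using h, fun j hj => ?_⟩
  induction j using Fin.lastCases with
  | last => rfl
  | cast i => simp at hj

lemma adj_update (u : Fin n → Bool) (i : Fin n) (h : b ≠ u i) :
    (hypercube n).Adj u (Function.update u i b) := by
  refine ⟨i, by simp [Ne.symm h], fun j hj => ?_⟩
  by_contra hne
  exact hj (show u j = _ from (Function.update_of_ne hne b u).symm)

lemma snoc_injective : Function.Injective (fun w : Fin n → Bool => (Fin.snoc w c : Fin (n+1) → Bool)) :=
  fun a b h => by
    have := congrArg Fin.init h
    simpa [Fin.init_snoc] using this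

lemma snoc_ne_snoc (h : c ≠ c') (z z' : Fin n → Bool) :
    (Fin.snoc z c : Fin (n+1) → Bool) ≠ Fin.snoc z' c' := fun he =>
  h (by simpa using congrFun he (Fin.last n))

def snocHom (n : ℕ) (c : Bool) : hypercube n →g hypercube (n+1) where
  toFun w := Fin.snoc w c
  map_rel' := by
    rintro a b ⟨i, hi, hu⟩
    refine ⟨i.castSucc, by simpa using hi, fun j hj => ?_⟩
    induction j using Fin.lastCases with
    | last => simp at hj
    | cast j' => simpa using congrArg Fin.castSucc (hu j' (by simpa using hj))

lemma mem_map_snoc {l : List (Fin n → Bool)} {y : Fin (n+1) → Bool}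
    (h : y ∈ l.map (fun z => (Fin.snoc z c : Fin (n+1) → Bool))) :
    ∃ z ∈ l, y = Fin.snoc z c := by
  obtain ⟨z, hz, rfl⟩ := List.mem_map.mp h
  exact ⟨z, hz, rfl⟩

/-- Hamming distance of snoc. -/
lemma hd_snoc (w w' : Fin n → Bool) (b b' : Bool) :
    hammingDist (Fin.snoc w b : Fin (n+1) → Bool) (Fin.snoc w' b') =
      hammingDist w w' + (if b = b' then 0 else 1) := by
  unfold hammingDist
  rw [Finset.card_filter, Finset.card_filter, Fin.sum_univ_castSucc]
  simp [Fin.snoc_castSucc, Fin.snoc_last, ite_not]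

lemma hd_le (u v : Fin n → Bool) : hammingDist u v ≤ n := by
  simpa using (hammingDist_le_card_fintype (x := u) (y := v))

lemma hd_pos {u v : Fin n → Bool} (h : u ≠ v) : 1 ≤ hammingDist u v :=
  Nat.pos_of_ne_zero fun h0 => h (eq_of_hammingDist_eq_zero h0)

lemma hd_univ {u v : Fin n → Bool} (h : ∀ i, u i ≠ v i) : hammingDist u v = n := by
  unfold hammingDist
  rw [Finset.filter_true_of_mem (fun i _ => h i)]
  simp

lemma hd_adj {u v : Fin n → Bool} (h : (hypercube n).Adj u v) : hammingDist u v = 1 := by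
  obtain ⟨i, hi, hu⟩ := h
  unfold hammingDist
  rw [Finset.card_eq_one]
  exact ⟨i, by
    ext j
    simp only [Finset.mem_filter, Finset.mem_univ, true_and, Finset.mem_singleton]
    exact ⟨fun hj => hu j hj, fun hj => hj ▸ hi⟩⟩

lemma hd_update {u : Fin n → Bool} {i : Fin n} (h : b ≠ u i) :
    hammingDist u (Function.update u i b) = 1 :=
  hd_adj (adj_update u i h)

lemma hd_update_all {u v : Fin n → Bool} (h : ∀ j, u j ≠ v j) (i : Fin n) :
    hammingDist (Function.update u i (v i)) v = n - 1 := by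
  unfold hammingDist
  have : (Finset.univ.filter fun j => Function.update u i (v i) j ≠ v j) =
      Finset.univ.erase i := by
    ext j
    simp only [Finset.mem_filter, Finset.mem_univ, true_and, Finset.mem_erase, and_true]
    constructor
    · intro hj hji; subst hji; simp at hj
    · intro hji; rw [Function.update_of_ne hji]; exact h j
  rw [this, Finset.card_erase_of_mem (Finset.mem_univ i)]
  simp

end HCAux
section Part2
namespace HCAux
open Finset SimpleGraph Walk

variable {n : ℕ} {c c' b : Bool}

lemma append_isPath {V : Type*} {G : SimpleGraph V} {v w : V} :
    ∀ {u : V} (p : G.Walk u v) (q : G.Walk v w), p.IsPath → q.IsPath →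
      (∀ x, x ∈ p.support → x ∈ q.support → x = v) → (p.append q).IsPath := by
  intro u p
  induction p with
  | nil => intro q _ hq _; simpa using hq
  | @cons u x v h p ih =>
    intro q hp hq hint
    rw [Walk.cons_append, Walk.cons_isPath_iff]
    rw [Walk.cons_isPath_iff] at hp
    refine ⟨ih q hp.1 hq (fun y hy hy2 => hint y (by simp [Walk.support_cons, hy]) hy2), ?_⟩
    rw [Walk.mem_support_append_iff]
    rintro (hu | hu)
    · exact hp.2 hu
    · have huv : u = v := hint u (Walk.start_mem_support _) hu
      exact hp.2 (huv ▸ p.end_mem_support)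

lemma not_edge_mem {V : Type*} {G : SimpleGraph V} {u v : V} (p : G.Walk v u)
    (hp : p.IsPath) (hne : u ≠ v) (hl : 2 ≤ p.length) : s(u, v) ∉ p.edges := by
  intro h
  cases p with
  | nil => simp at h
  | @cons _ x _ hadj q =>
    rw [Walk.edges_cons, List.mem_cons] at h
    rw [Walk.cons_isPath_iff] at hp
    rcases h with h | h
    · rw [Sym2.eq_iff] at h
      rcases h with ⟨h1, -⟩ | ⟨h1, -⟩
      · exact hne h1
      · subst h1
        have : q = Walk.nil := (Walk.isPath_iff_eq_nil (p := q)).mp hp.1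
        subst this
        simp at hl
    · exact hp.2 (Walk.snd_mem_support_of_mem_edges q h)

/-- transfer a path statement along a graph isomorphism -/
lemma transfer_path {V V' : Type*} {G : SimpleGraph V} {G' : SimpleGraph V'}
    (f : G ≃g G') {u v : V} {m : ℕ}
    (h : ∃ p : G'.Walk (f u) (f v), p.IsPath ∧ p.length = m) :
    ∃ p : G.Walk u v, p.IsPath ∧ p.length = m := by
  obtain ⟨p, hp, hl⟩ := h
  refine ⟨(p.map f.symm.toHom).copy (by simp) (by simp), ?_, ?_⟩
  · rw [Walk.isPath_copy]
    exact Walk.map_isPath_of_injective f.symm.injective hp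
  · rw [Walk.length_copy, Walk.length_map]; exact hl

def xorIso (t : Fin n → Bool) : hypercube n ≃g hypercube n where
  toEquiv := ⟨fun w i => xor (t i) (w i), fun w i => xor (t i) (w i),
    fun w => by funext i; show xor (t i) (xor (t i) (w i)) = w i; cases t i <;> cases w i <;> rfl,
    fun w => by funext i; show xor (t i) (xor (t i) (w i)) = w i; cases t i <;> cases w i <;> rfl⟩
  map_rel_iff' := by
    intro a b
    refine existsUnique_congr fun i => ?_
    show (xor (t i) (a i) ≠ xor (t i) (b i)) ↔ (a i ≠ b i)
    cases t i <;> cases a i <;> cases b i <;> simp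

lemma hd_xor (t u v : Fin n → Bool) :
    hammingDist ((xorIso t) u) ((xorIso t) v) = hammingDist u v := by
  unfold hammingDist
  congr 1
  apply Finset.filter_congr
  intro i _
  show (xor (t i) (u i) ≠ xor (t i) (v i)) ↔ _
  cases t i <;> cases u i <;> cases v i <;> simp

def permIso (π : Equiv.Perm (Fin n)) : hypercube n ≃g hypercube n where
  toEquiv := ⟨fun w => w ∘ π, fun w => w ∘ π.symm,
    fun w => by funext i; show w (π (π.symm i)) = w i; rw [Equiv.apply_symm_apply],
    fun w => by funext i; show w (π.symm (π i)) = w i; rw [Equiv.symm_apply_apply]⟩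
  map_rel_iff' := by
    intro a b
    show (∃! i, a (π i) ≠ b (π i)) ↔ (∃! i, a i ≠ b i)
    exact Equiv.existsUnique_congr_right (q := fun i => a i ≠ b i) (e := π)

lemma hd_perm (π : Equiv.Perm (Fin n)) (u v : Fin n → Bool) :
    hammingDist ((permIso π) u) ((permIso π) v) = hammingDist u v := by
  unfold hammingDist
  apply Finset.card_equiv π
  intro i
  simp only [Finset.mem_filter, Finset.mem_univ, true_and]
  exact Iff.rfl

end HCAux
end Part2
section Part3
namespace HCAux
open Finset SimpleGraph Walk

variable {n : ℕ} {c c' b : Bool}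

@[simp] lemma snocHom_apply (w : Fin n → Bool) : (snocHom n c) w = Fin.snoc w c := rfl

lemma snocHom_inj : Function.Injective (snocHom n c) := snoc_injective

def KeyProp (n : ℕ) : Prop :=
  ∀ (u v : Fin n → Bool), u ≠ v → ∀ m, hammingDist u v ≤ m → m ≤ 2^n - 1 →
    m % 2 = hammingDist u v % 2 →
    ∃ p : (hypercube n).Walk u v, p.IsPath ∧ p.length = m

lemma stepA (n : ℕ) (hn : 1 ≤ n) (IH : KeyProp n)
    (u v : Fin (n+1) → Bool) (hne : u ≠ v) (hlast : u (Fin.last n) = v (Fin.last n))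
    (m : ℕ) (hdm : hammingDist u v ≤ m) (hm2 : m ≤ 2^(n+1) - 1)
    (hpar : m % 2 = hammingDist u v % 2) :
    ∃ p : (hypercube (n+1)).Walk u v, p.IsPath ∧ p.length = m := by
  set c := u (Fin.last n) with hc
  set u0 := Fin.init u with hu0
  set v0 := Fin.init v with hv0
  have hu : Fin.snoc u0 c = u := Fin.snoc_init_self u
  have hv : Fin.snoc v0 c = v := by rw [hlast]; exact Fin.snoc_init_self v
  have hne0 : u0 ≠ v0 := fun h => hne (by rw [← hu, ← hv, h])
  have hd0 : hammingDist u0 v0 = hammingDist u v := by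
    rw [← hu, ← hv, hd_snoc]; simp
  have hdle : hammingDist u0 v0 ≤ n := hd_le u0 v0
  have hd1 : 1 ≤ hammingDist u v := hd_pos hne
  have hnlt : n < 2^n := Nat.lt_two_pow_self
  have h2n : 2 ^ (n+1) = 2 * 2^n := by rw [pow_succ]; ring
  have h2mod : 2^n % 2 = 0 := by
    have : (2:ℕ) ∣ 2^n := dvd_pow_self 2 (by omega)
    omega
  have h2le : 2 ≤ 2^n := by
    have : 2^1 ≤ 2^n := Nat.pow_le_pow_right (by norm_num) hn
    simpa using this
  clear_value u0 v0
  by_cases hm : m ≤ 2^n - 1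
  · obtain ⟨p, hp, hl⟩ := IH u0 v0 hne0 m (by omega) hm (by omega)
    refine ⟨(p.map (snocHom n c)).copy hu hv, ?_, ?_⟩
    · refine (Walk.isPath_copy _ _ _).mpr ?_
      exact Walk.map_isPath_of_injective snocHom_inj hp
    · refine (Walk.length_copy _ _ _).trans ?_
      rw [Walk.length_map]; exact hl
  · have hm' : 2^n ≤ m := by omega
    set d := hammingDist u v with hd
    set m0 := if d % 2 = 1 then 2^n - 1 else 2^n - 2 with hm0def
    have hm0facts : d ≤ m0 ∧ m0 ≤ 2^n - 1 ∧ m0 % 2 = d % 2 ∧ 1 ≤ m0 ∧ 2^n - 2 ≤ m0 := by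
      by_cases hdp : d % 2 = 1 <;> simp only [hm0def, hdp, if_true, if_false, if_pos, if_neg,
        Nat.one_ne_zero, not_false_iff] <;> omega
    obtain ⟨hdm0, hm0le, hm0par, hm0pos, hm0ge⟩ := hm0facts
    obtain ⟨p0, hp0, hl0⟩ := IH u0 v0 hne0 m0 (by omega) hm0le (by omega)
    cases p0 with
    | nil => rw [Walk.length_nil] at hl0; omega
    | @cons _ x _ hadj q =>
      rw [Walk.cons_isPath_iff] at hp0
      rw [Walk.length_cons] at hl0
      set a' := m - m0 - 1 with ha'
      have ha'facts : a' % 2 = 1 ∧ 1 ≤ a' ∧ a' ≤ 2^n - 1 := by omega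
      obtain ⟨ha'1, ha'2, ha'3⟩ := ha'facts
      have hax : hammingDist u0 x = 1 := hd_adj hadj
      obtain ⟨p1, hp1, hl1⟩ := IH u0 x hadj.ne a' (by omega) ha'3 (by omega)
      have hcc' : c ≠ !c := by cases c <;> simp
      refine ⟨(Walk.cons (show (hypercube (n+1)).Adj (Fin.snoc u0 c) ((snocHom n (!c)) u0) from adj_snoc hcc')
          ((p1.map (snocHom n (!c))).append
            (Walk.cons (show (hypercube (n+1)).Adj ((snocHom n (!c)) x) ((snocHom n c) x) from adj_snoc hcc'.symm) (q.map (snocHom n c))))).copy hu hv, ?_, ?_⟩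
      · refine (Walk.isPath_copy _ _ _).mpr ?_
        rw [Walk.cons_isPath_iff]
        constructor
        · apply append_isPath
          · exact Walk.map_isPath_of_injective snocHom_inj hp1
          · rw [Walk.cons_isPath_iff]
            refine ⟨Walk.map_isPath_of_injective snocHom_inj hp0.1, ?_⟩
            intro hmem
            rw [Walk.support_map] at hmem
            obtain ⟨z, hz, heq⟩ := List.mem_map.mp hmem
            exact snoc_ne_snoc hcc' z x heq
          · intro y hy1 hy2
            rw [Walk.support_map] at hy1
            obtain ⟨z1, hz1, rfl⟩ := List.mem_map.mp hy1
            rw [Walk.support_cons, List.mem_cons] at hy2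
            rcases hy2 with h | h
            · exact h
            · rw [Walk.support_map] at h
              obtain ⟨z2, hz2, heq⟩ := List.mem_map.mp h
              exact absurd heq (snoc_ne_snoc hcc' z2 z1)
        · intro hmem
          rw [Walk.mem_support_append_iff] at hmem
          rcases hmem with h | h
          · rw [Walk.support_map] at h
            obtain ⟨z, hz, heq⟩ := List.mem_map.mp h
            exact snoc_ne_snoc hcc'.symm z u0 heq
          · rw [Walk.support_cons, List.mem_cons] at h
            rcases h with h | h
            · exact snoc_ne_snoc hcc' u0 x h
            · rw [Walk.support_map] at h
              obtain ⟨z, hz, heq⟩ := List.mem_map.mp h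
              have hz' : z = u0 := snoc_injective heq
              exact hp0.2 (hz' ▸ hz)
      · refine (Walk.length_copy _ _ _).trans ?_
        rw [Walk.length_cons, Walk.length_append, Walk.length_cons,
          Walk.length_map, Walk.length_map]
        omega

lemma stepB (n : ℕ) (hn : 1 ≤ n) (IH : KeyProp n)
    (u v : Fin (n+1) → Bool) (hall : ∀ j, u j ≠ v j)
    (m : ℕ) (hdm : hammingDist u v ≤ m) (hm2 : m ≤ 2^(n+1) - 1)
    (hpar : m % 2 = hammingDist u v % 2) :
    ∃ p : (hypercube (n+1)).Walk u v, p.IsPath ∧ p.length = m := by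
  set c := u (Fin.last n) with hc
  set u0 := Fin.init u with hu0
  set v0 := Fin.init v with hv0
  have hu : Fin.snoc u0 c = u := Fin.snoc_init_self u
  have hv : Fin.snoc v0 (v (Fin.last n)) = v := Fin.snoc_init_self v
  have hlast : c ≠ v (Fin.last n) := hall _
  have hall0 : ∀ j, u0 j ≠ v0 j := fun j => hall j.castSucc
  have hne0 : u0 ≠ v0 := fun h => hall0 ⟨0, hn⟩ (congrFun h _)
  have hduv : hammingDist u v = n + 1 := hd_univ hall
  have hd00 : hammingDist u0 v0 = n := hd_univ hall0
  have hnlt : n < 2^n := Nat.lt_two_pow_self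
  have h2n : 2 ^ (n+1) = 2 * 2^n := by rw [pow_succ]; ring
  have h2mod : 2^n % 2 = 0 := by
    have : (2:ℕ) ∣ 2^n := dvd_pow_self 2 (by omega)
    omega
  have h2le : 2 ≤ 2^n := by
    have : 2^1 ≤ 2^n := Nat.pow_le_pow_right (by norm_num) hn
    simpa using this
  by_cases hm : m ≤ 2^n
  · obtain ⟨p, hp, hl⟩ := IH u0 v0 hne0 (m-1) (by rw [hd00]; omega) (by omega) (by rw [hd00]; omega)
    refine ⟨((p.map (snocHom n c)).append
        (Walk.cons (show (hypercube (n+1)).Adj ((snocHom n c) v0) (Fin.snoc v0 (v (Fin.last n))) from adj_snoc hlast) Walk.nil)).copy hu hv, ?_, ?_⟩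
    · refine (Walk.isPath_copy _ _ _).mpr ?_
      apply append_isPath
      · exact Walk.map_isPath_of_injective snocHom_inj hp
      · rw [Walk.cons_isPath_iff]
        refine ⟨Walk.IsPath.nil, ?_⟩
        rw [Walk.support_nil, List.mem_singleton]
        exact snoc_ne_snoc hlast v0 v0
      · intro y hy1 hy2
        rw [Walk.support_cons, Walk.support_nil] at hy2
        rcases List.mem_cons.mp hy2 with h | h
        · exact h
        · rw [List.mem_singleton] at h
          rw [Walk.support_map] at hy1
          obtain ⟨z, hz, rfl⟩ := List.mem_map.mp hy1
          exact absurd h (snoc_ne_snoc hlast z v0)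
    · refine (Walk.length_copy _ _ _).trans ?_
      rw [Walk.length_append, Walk.length_map, Walk.length_cons,
        Walk.length_nil]
      omega
  · have hm' : 2^n + 1 ≤ m := by omega
    have hn2 : 2 ≤ n := by
      by_contra h
      have hn1 : n = 1 := by omega
      subst hn1
      have e1 : (2:ℕ)^1 = 2 := by norm_num
      have e2 : (2:ℕ)^2 = 4 := by norm_num
      omega
    set i0 : Fin n := ⟨0, by omega⟩ with hi0
    set w0 := Function.update u0 i0 (v0 i0) with hw0
    have hw0u : u0 ≠ w0 := fun h =>
      hall0 i0 ((congrFun h i0).trans (Function.update_self i0 (v0 i0) u0))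
    have hdw0 : hammingDist u0 w0 = 1 := hd_update (Ne.symm (hall0 i0))
    have hdw0v : hammingDist w0 v0 = n - 1 := hd_update_all hall0 i0
    have hw0v : w0 ≠ v0 := by
      intro h
      have hi10 : (⟨1, by omega⟩ : Fin n) ≠ i0 := by
        simp [hi0, Fin.ext_iff]
      have h1 := congrFun h (⟨1, by omega⟩ : Fin n)
      rw [hw0, Function.update_of_ne hi10] at h1
      exact hall0 _ h1
    obtain ⟨a, ha3, halb, haub⟩ : ∃ a, a % 2 = 1 ∧ m - 2^n ≤ a ∧ a ≤ m - 2^n + 1 := by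
      by_cases hq1 : (m - 2^n) % 2 = 1
      · exact ⟨m - 2^n, hq1, le_refl _, by omega⟩
      · exact ⟨m - 2^n + 1, by omega, by omega, le_refl _⟩
    set bb := m - 1 - a with hbb
    have ha1 : 1 ≤ a := by omega
    have ha2 : a ≤ 2^n - 1 := by omega
    have hb1 : bb % 2 = (n-1) % 2 := by omega
    have hb2 : n - 1 ≤ bb := by omega
    have hb3 : bb ≤ 2^n - 1 := by omega
    have hab : a + bb = m - 1 := by omega
    obtain ⟨p1, hp1, hl1⟩ := IH u0 w0 hw0u a (by rw [hdw0]; omega) ha2 (by rw [hdw0]; omega)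
    obtain ⟨p2, hp2, hl2⟩ := IH w0 v0 hw0v bb (by rw [hdw0v]; omega) hb3 (by rw [hdw0v]; omega)
    refine ⟨((p1.map (snocHom n c)).append
      (Walk.cons (show (hypercube (n+1)).Adj ((snocHom n c) w0) ((snocHom n (v (Fin.last n))) w0) from adj_snoc hlast) (p2.map (snocHom n (v (Fin.last n)))))).copy hu hv, ?_, ?_⟩
    · refine (Walk.isPath_copy _ _ _).mpr ?_
      apply append_isPath
      · exact Walk.map_isPath_of_injective snocHom_inj hp1
      · rw [Walk.cons_isPath_iff]
        refine ⟨Walk.map_isPath_of_injective snocHom_inj hp2, ?_⟩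
        intro hmem
        rw [Walk.support_map] at hmem
        obtain ⟨z, hz, heq⟩ := List.mem_map.mp hmem
        exact snoc_ne_snoc (Ne.symm hlast) z w0 heq
      · intro y hy1 hy2
        rw [Walk.support_map] at hy1
        obtain ⟨z1, hz1, rfl⟩ := List.mem_map.mp hy1
        rw [Walk.support_cons, List.mem_cons] at hy2
        rcases hy2 with h | h
        · exact h
        · rw [Walk.support_map] at h
          obtain ⟨z2, hz2, heq⟩ := List.mem_map.mp h
          exact absurd heq (snoc_ne_snoc (Ne.symm hlast) z2 z1)
    · refine (Walk.length_copy _ _ _).trans ?_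
      rw [Walk.length_append, Walk.length_map, Walk.length_cons,
        Walk.length_map]
      omega

lemma key : ∀ n, KeyProp n := by
  intro n
  induction n with
  | zero => intro u v hne; exact absurd (funext fun i => i.elim0) hne
  | succ n IH =>
    intro u v hne m hdm hm2 hpar
    rcases Nat.eq_zero_or_pos n with rfl | hn
    · have h1 : hammingDist u v = 1 := by
        have h2 := hd_le u v
        have h3 := hd_pos hne
        omega
      have hm2' : m ≤ 1 := by simpa using hm2
      have hm1 : m = 1 := by omega
      subst hm1
      refine ⟨Walk.cons (fin1_adj hne) Walk.nil, ?_, rfl⟩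
      rw [Walk.cons_isPath_iff]
      refine ⟨Walk.IsPath.nil, ?_⟩
      rw [Walk.support_nil, List.mem_singleton]
      exact hne
    · by_cases hA : ∃ j, u j = v j
      · obtain ⟨j, hj⟩ := hA
        set π : Equiv.Perm (Fin (n+1)) := Equiv.swap j (Fin.last n) with hπ
        apply transfer_path (permIso π)
        have hlast : ((permIso π) u) (Fin.last n) = ((permIso π) v) (Fin.last n) := by
          show u (π (Fin.last n)) = v (π (Fin.last n))
          rw [hπ, Equiv.swap_apply_right]
          exact hj
        have hne' : (permIso π) u ≠ (permIso π) v := fun h =>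
          hne ((permIso π).toEquiv.injective h)
        exact stepA n hn IH _ _ hne' hlast m (by rw [hd_perm]; exact hdm) hm2
          (by rw [hd_perm]; exact hpar)
      · push_neg at hA
        exact stepB n hn IH u v hA m hdm hm2 hpar

end HCAux
end Part3
section Part4
namespace HCAux
open Finset SimpleGraph Walk

variable {n k : ℕ}

lemma edges_mapLe {V : Type*} {G G' : SimpleGraph V} (h : G ≤ G') {u v : V}
    (p : G.Walk u v) : (p.mapLe h).edges = p.edges := by
  rw [Walk.mapLe, Walk.edges_map]
  have : (Sym2.map ⇑(Hom.ofLE h)) = id := Sym2.map_id'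
  rw [this, List.map_id]

lemma length_mapLe {V : Type*} {G G' : SimpleGraph V} (h : G ≤ G') {u v : V}
    (p : G.Walk u v) : (p.mapLe h).length = p.length := by
  rw [Walk.mapLe, Walk.length_map]

lemma isPath_mapLe {V : Type*} {G G' : SimpleGraph V} (h : G ≤ G') {u v : V}
    {p : G.Walk u v} (hp : p.IsPath) : (p.mapLe h).IsPath :=
  Walk.map_isPath_of_injective (fun _ _ hh => hh) hp

lemma hd_firstk (u : Fin n → Bool) (k : ℕ) (hk : k ≤ n) :
    hammingDist u (fun i => if (i : ℕ) < k then !(u i) else u i) = k := by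
  unfold hammingDist
  have he : (Finset.univ.filter fun i : Fin n =>
      u i ≠ (if (i:ℕ) < k then !(u i) else u i)) =
      Finset.univ.filter (fun i : Fin n => (i:ℕ) < k) := by
    ext i
    by_cases h : (i:ℕ) < k <;> simp [h]
  have hc : (Finset.univ.filter (fun i : Fin n => (i:ℕ) < k)).card =
      (Finset.range k).card := by
    exact Finset.card_bij' (fun (i : Fin n) _ => (i : ℕ))
        (fun j hj => (⟨j, lt_of_lt_of_le (Finset.mem_range.mp hj) hk⟩ : Fin n))
        (fun a ha => Finset.mem_range.mpr ((Finset.mem_filter.mp ha).2))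
        (fun a ha => Finset.mem_filter.mpr ⟨Finset.mem_univ _, Finset.mem_range.mp ha⟩)
        (fun a ha => rfl) (fun a ha => rfl)
  rw [he, hc, Finset.card_range]

end HCAux
end Part4

open Walk in
/-- Every vertex of `Q_{n,k}` (`n ≥ 3`) lies on a cycle of every even length from
`4` to `2^n`; and if `k` is even, every vertex also lies on a cycle of every odd
length from `k + 1` to `2^n - 1`. -/
theorem stmt18 (n k : ℕ) (h1 : 1 ≤ k) (h2 : k ≤ n) (hn : 3 ≤ n) :
    ∀ u : Fin n → Bool,
      (∀ l : ℕ, Even l → 4 ≤ l → l ≤ 2 ^ n →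
        ∃ c : (enhanced n k).Walk u u, c.IsCycle ∧ c.length = l) ∧
      (Even k → ∀ l : ℕ, Odd l → k + 1 ≤ l → l ≤ 2 ^ n - 1 →
        ∃ c : (enhanced n k).Walk u u, c.IsCycle ∧ c.length = l) := by
  intro u
  have hsub : hypercube n ≤ enhanced n k := fun {a b} h => Or.inl h
  have hpow1 : 0 < 2^n := pow_pos (by norm_num) n
  constructor
  · intro l hle h4 hl2
    have hl0 : l % 2 = 0 := Nat.even_iff.mp hle
    set i0 : Fin n := ⟨0, by omega⟩ with hi0
    set v := Function.update u i0 (!(u i0)) with hv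
    have hadj : (hypercube n).Adj u v :=
      HCAux.adj_update u i0 (by cases u i0 <;> simp)
    have hd1 : hammingDist v u = 1 := by
      rw [hammingDist_comm]; exact HCAux.hd_adj hadj
    obtain ⟨p, hp, hl⟩ := HCAux.key n v u hadj.symm.ne (l-1)
      (by rw [hd1]; omega) (by omega) (by rw [hd1]; omega)
    refine ⟨Walk.cons (show (enhanced n k).Adj u v from Or.inl hadj) (p.mapLe hsub), ?_, ?_⟩
    · rw [Walk.cons_isCycle_iff]
      refine ⟨HCAux.isPath_mapLe hsub hp, ?_⟩
      rw [HCAux.edges_mapLe]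
      exact HCAux.not_edge_mem p hp hadj.ne (by omega)
    · rw [Walk.length_cons, HCAux.length_mapLe, hl]; omega
  · intro hke l hlo hkl hl2
    have hk0 : k % 2 = 0 := Nat.even_iff.mp hke
    have hl1 : l % 2 = 1 := Nat.odd_iff.mp hlo
    have hk2 : 2 ≤ k := by omega
    set v := (fun i : Fin n => if (i : ℕ) < k then !(u i) else u i) with hv
    have hdk : hammingDist u v = k := HCAux.hd_firstk u k h2
    have hne : u ≠ v := by
      intro h
      rw [h, hammingDist_self] at hdk
      omega
    have hskip : skipRel n k u v := by
      refine ⟨hne, fun i => ⟨fun hik => ?_, fun hik => ?_⟩⟩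
      · show u i ≠ if (i:ℕ) < k then !(u i) else u i
        rw [if_pos hik]
        cases u i <;> simp
      · show u i = if (i:ℕ) < k then !(u i) else u i
        rw [if_neg (by omega)]
    have hadj : (enhanced n k).Adj u v := Or.inr hskip
    obtain ⟨p, hp, hl⟩ := HCAux.key n v u hne.symm (l-1)
      (by rw [hammingDist_comm, hdk]; omega) (by omega)
      (by rw [hammingDist_comm, hdk]; omega)
    refine ⟨Walk.cons hadj (p.mapLe hsub), ?_, ?_⟩
    · rw [Walk.cons_isCycle_iff]
      refine ⟨HCAux.isPath_mapLe hsub hp, ?_⟩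
      rw [HCAux.edges_mapLe]
      intro hmem
      have h1' : (hypercube n).Adj u v := p.adj_of_mem_edges hmem
      have h2' := HCAux.hd_adj h1'
      omega
    · rw [Walk.length_cons, HCAux.length_mapLe, hl]; omega
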